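/- Corollary: the EWS-last sequential rule under ρ* and the Over-and-Above rule under ρ̊ choose exactly the same set of individuals on I if and only if I is materially unaffected by the violation of the Equality Code under the Over-and-Above rule, i.e., no nonempty subset of 𝒥 ∩ I suffers from a violation. -/

import Mathlib

attribute [local instance] Classical.propDecidable

noncomputable section

variable {ι R : Type*} [Fintype ι] [DecidableEq ι] [Fintype R] [DecidableEq R]

/-- Eligibility sets: everyone is eligible for the open category (`none`),
and `elig c` is the set of members of VR-protected category `c`. -/
def eligOf (elig : R → Finset ι) : Option R → Finset ι
  | none => (Finset.univ : Finset ι)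
  | some c => elig c

/-- Aggregate choice: all individuals chosen across all categories. -/
def aggC (C : Finset ι → Option R → Finset ι) (I : Finset ι) : Finset ι :=
  Finset.univ.biUnion fun v => C I v

/-- `C` is a choice rule for capacities `q` and eligibility `elig`: each category chooses
eligible applicants up to capacity, and no individual is chosen by two categories. -/
def IsChoiceRule (q : Option R → ℕ) (elig : R → Finset ι)
    (C : Finset ι → Option R → Finset ι) : Prop :=
  ∀ I : Finset ι,
    (∀ v, C I v ⊆ I ∩ eligOf elig v) ∧
    (∀ v, (C I v).card ≤ q v) ∧
    (∀ v v', v ≠ v' → Disjoint (C I v) (C I v'))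

/-- Non-wastefulness: no position remains idle while an eligible applicant is unchosen. -/
def NonWasteful (q : Option R → ℕ) (elig : R → Finset ι)
    (C : Finset ι → Option R → Finset ι) : Prop :=
  ∀ (I : Finset ι) (v : Option R) (j : ι),
    j ∈ I → j ∉ aggC C I → (C I v).card < q v → j ∉ eligOf elig v

/-- No justified envy: a chosen individual outscores every eligible entirely-unchosen applicant. -/
def NoJustifiedEnvy (σ : ι → ℝ) (elig : R → Finset ι)
    (C : Finset ι → Option R → Finset ι) : Prop :=
  ∀ (I : Finset ι) (v : Option R) (i j : ι),
    i ∈ C I v → j ∈ I → j ∈ eligOf elig v → j ∉ aggC C I → σ j < σ i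

/-- Compliance with VR protections: a VR recipient implies the open category is full, with
every open-category recipient scoring strictly higher. -/
def CompliesVR (σ : ι → ℝ) (q : Option R → ℕ)
    (C : Finset ι → Option R → Finset ι) : Prop :=
  ∀ (I : Finset ι) (c : R) (i : ι), i ∈ C I (some c) →
    (C I none).card = q none ∧ ∀ j ∈ C I none, σ i < σ j

/-- The (at most) `k` highest merit-score members of `S`. -/
def topK (σ : ι → ℝ) (S : Finset ι) (k : ℕ) : Finset ι :=
  S.filter fun i => (S.filter fun j => σ i ≤ σ j).card ≤ k

/-- The Over-and-Above choice rule: open positions go to the top-merit applicants; then each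
VR category's quota is filled by the highest-merit remaining eligible members. -/
def OA (σ : ι → ℝ) (q : Option R → ℕ) (elig : R → Finset ι)
    (I : Finset ι) : Option R → Finset ι
  | none => topK σ I (q none)
  | some c => topK σ ((I \ topK σ I (q none)) ∩ elig c) (q (some c))

/-- The sequential choice rule: categories are processed in the order given by the list,
each filling its positions by serial dictatorship on the remaining eligible applicants. -/
def seqAssign (σ : ι → ℝ) (q : Option R → ℕ) (elig : R → Finset ι) :
    List (Option R) → Finset ι → Option R → Finset ι
  | [], _, _ => ∅
  | v :: rest, I, u =>
    let chosen := topK σ (I ∩ eligOf elig v) (q v)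
    if u = v then chosen else seqAssign σ q elig rest (I \ chosen) u

/-- Eligibility sets induced by a membership profile `ρ`. -/
def eligρ (ρ : ι → Finset R) (c : R) : Finset ι :=
  Finset.univ.filter fun i => c ∈ ρ i

/-- Aggregate outcome of the Over-and-Above rule under membership profile `ρ`. -/
def aggOA (σ : ι → ℝ) (q : Option R → ℕ) (ρ : ι → Finset R) (I : Finset ι) : Finset ι :=
  aggC (OA σ q (eligρ ρ)) I

/-- The profile `(ρ₋ⱼ, ρ̃ⱼ)`: each member of `J` is reassigned membership `{e}` only. -/
def updProf (ρ : ι → Finset R) (e : R) (J : Finset ι) : ι → Finset R :=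
  fun i => if i ∈ J then {e} else ρ i

/-- `J ⊆ 𝒥 ∩ I` suffers from a violation of the Equality Code under the Over-and-Above rule
with profile `ρ` for `I`: every member of `J` is unchosen under `ρ` but chosen once the
members of `J` are reassigned membership `{e}`. -/
def Suffers (σ : ι → ℝ) (q : Option R → ℕ) (ρ : ι → Finset R) (e : R)
    (JJ I J : Finset ι) : Prop :=
  J ⊆ JJ ∩ I ∧ ∀ j ∈ J, j ∉ aggOA σ q ρ I ∧ j ∈ aggOA σ q (updProf ρ e J) I

/-- `J` is a maximal set of individuals suffering from a violation of the Equality Code. -/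
def MaximalSuffers (σ : ι → ℝ) (q : Option R → ℕ) (ρ : ι → Finset R) (e : R)
    (JJ I J : Finset ι) : Prop :=
  J ⊆ (JJ ∩ I) \ aggOA σ q ρ I ∧
  Suffers σ q ρ e JJ I J ∧
  ∀ J' ⊆ (JJ ∩ I) \ aggOA σ q ρ I, J ⊂ J' →
    ¬ Suffers σ q ρ e JJ I J' ∧ J ⊆ aggOA σ q (updProf ρ e J') I

/-- The expanded profile `ρ*`: members of `𝒥` get an additional membership of `e`. -/
def ρstar (ρ : ι → Finset R) (e : R) (JJ : Finset ι) : ι → Finset R :=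
  fun i => if i ∈ JJ then insert e (ρ i) else ρ i

/-- Aggregate outcome of the sequential choice rule under profile `ρ` and the given order. -/
def aggSeq (σ : ι → ℝ) (q : Option R → ℕ) (ρ : ι → Finset R)
    (order : List (Option R)) (I : Finset ι) : Finset ι :=
  Finset.univ.biUnion (seqAssign σ q (eligρ ρ) order I)

/-- The EWS-last order of precedence: open first, caste-based categories (listed by `L`), `e` last. -/
def ewsLastOrder (e : R) (L : List R) : List (Option R) :=
  (none : Option R) :: (L.map some ++ [some e])

set_option linter.unusedSectionVars false

/-! ### Auxiliary lemmas -/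

lemma topK_subset' (σ : ι → ℝ) (S : Finset ι) (k : ℕ) : topK σ S k ⊆ S :=
  Finset.filter_subset _ _

lemma mem_topK' {σ : ι → ℝ} {S : Finset ι} {k : ℕ} {i : ι} :
    i ∈ topK σ S k ↔ i ∈ S ∧ (S.filter fun j => σ i ≤ σ j).card ≤ k := by
  simp [topK]

lemma topK_mono' {σ : ι → ℝ} {S T : Finset ι} {k : ℕ} (hTS : T ⊆ S) {i : ι}
    (hi : i ∈ topK σ S k) (hiT : i ∈ T) : i ∈ topK σ T k := by
  rw [mem_topK'] at hi ⊢
  refine ⟨hiT, le_trans (Finset.card_le_card ?_) hi.2⟩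
  intro j hj
  simp only [Finset.mem_filter] at hj ⊢
  exact ⟨hTS hj.1, hj.2⟩

lemma card_topK' (σ : ι → ℝ) (hσ : Function.Injective σ) (S : Finset ι) (k : ℕ) :
    (topK σ S k).card = min k S.card := by
  classical
  set rk : ι → ℕ := fun i => (S.filter fun j => σ i ≤ σ j).card with hrk
  have hmono : ∀ i ∈ S, ∀ i' ∈ S, σ i < σ i' → rk i' < rk i := by
    intro i hi i' hi' hlt
    apply Finset.card_lt_card
    rw [Finset.ssubset_iff_of_subset]
    · exact ⟨i, by simp [hi], by simp [hi, not_le.mpr hlt]⟩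
    · intro j hj
      simp only [Finset.mem_filter] at hj ⊢
      exact ⟨hj.1, le_trans hlt.le hj.2⟩
  have hinj : Set.InjOn rk S := by
    intro i hi i' hi' hij
    by_contra hne
    rcases lt_trichotomy (σ i) (σ i') with h | h | h
    · exact (hmono i hi i' hi' h).ne hij.symm
    · exact hne (hσ h)
    · exact (hmono i' hi' i hi h).ne hij
  have h1le : ∀ i ∈ S, 1 ≤ rk i ∧ rk i ≤ S.card := by
    intro i hi
    constructor
    · exact Finset.card_pos.mpr ⟨i, by simp [hi]⟩
    · exact Finset.card_le_card (Finset.filter_subset _ _)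
  have himg : S.image rk = Finset.Icc 1 S.card := by
    apply Finset.eq_of_subset_of_card_le
    · intro m hm
      simp only [Finset.mem_image] at hm
      obtain ⟨i, hi, rfl⟩ := hm
      simp only [Finset.mem_Icc]
      exact h1le i hi
    · rw [Finset.card_image_of_injOn hinj, Nat.card_Icc]
      omega
  have hfilt : topK σ S k = S.filter fun i => rk i ≤ k := rfl
  have h2 : (topK σ S k).image rk = (S.image rk).filter (· ≤ k) := by
    rw [hfilt, Finset.filter_image]
  have h3 : (topK σ S k).card = ((topK σ S k).image rk).card :=
    (Finset.card_image_of_injOn (hinj.mono (by rw [hfilt]; exact Finset.filter_subset _ _))).symm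
  rw [h3, h2, himg]
  have : (Finset.Icc 1 S.card).filter (· ≤ k) = Finset.Icc 1 (min k S.card) := by
    ext m
    simp only [Finset.mem_filter, Finset.mem_Icc]
    omega
  rw [this, Nat.card_Icc]
  omega

lemma topK_lt_of_not_mem' {σ : ι → ℝ} (hσ : Function.Injective σ) {S : Finset ι} {k : ℕ}
    {i j : ι} (hi : i ∈ topK σ S k) (hjS : j ∈ S) (hj : j ∉ topK σ S k) : σ j < σ i := by
  rw [mem_topK'] at hi
  have hcount : ¬ (S.filter fun l => σ j ≤ σ l).card ≤ k := by
    intro h; exact hj (mem_topK'.mpr ⟨hjS, h⟩)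
  rcases lt_trichotomy (σ j) (σ i) with h | h | h
  · exact h
  · exfalso; have hji := hσ h; subst hji; exact hj (mem_topK'.mpr hi)
  · exfalso
    apply hcount
    refine le_trans (Finset.card_le_card ?_) hi.2
    intro l hl
    simp only [Finset.mem_filter] at hl ⊢
    exact ⟨hl.1, le_trans h.le hl.2⟩

lemma mem_eligρ' {ρ : ι → Finset R} {c : R} {i : ι} : i ∈ eligρ ρ c ↔ c ∈ ρ i := by
  simp [eligρ]

lemma eligρ_ρstar_ne' {ρ : ι → Finset R} {e c : R} {JJ : Finset ι} (h : c ≠ e) :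
    eligρ (ρstar ρ e JJ) c = eligρ ρ c := by
  ext i
  simp only [mem_eligρ', ρstar]
  split_ifs with hi
  · simp [Finset.mem_insert, h]
  · rfl

lemma eligρ_ρstar_e' {ρ : ι → Finset R} {e : R} {JJ : Finset ι} :
    eligρ (ρstar ρ e JJ) e = eligρ ρ e ∪ JJ := by
  ext i
  simp only [mem_eligρ', ρstar, Finset.mem_union]
  split_ifs with hi <;> simp [hi]

lemma eligρ_upd_ne' {ρ : ι → Finset R} {e c : R} {J : Finset ι} (h : c ≠ e) :
    eligρ (updProf ρ e J) c = eligρ ρ c \ J := by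
  ext i
  simp only [mem_eligρ', updProf, Finset.mem_sdiff]
  split_ifs with hi
  · simp [Finset.mem_singleton, h, hi]
  · simp [hi]

lemma eligρ_upd_e' {ρ : ι → Finset R} {e : R} {J : Finset ι} :
    eligρ (updProf ρ e J) e = eligρ ρ e ∪ J := by
  ext i
  simp only [mem_eligρ', updProf, Finset.mem_union]
  split_ifs with hi <;> simp [hi]

lemma eligρ_disjoint' {ρ : ι → Finset R} (hρ : ∀ i, (ρ i).card ≤ 1) {c c' : R} (h : c ≠ c') :
    Disjoint (eligρ ρ c) (eligρ ρ c') := by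
  rw [Finset.disjoint_left]
  intro i hi hi'
  rw [mem_eligρ'] at hi hi'
  have h2 : 1 < (ρ i).card := Finset.one_lt_card.mpr ⟨c, hi, c', hi', h⟩
  have := hρ i
  omega

lemma seqAssign_eq_empty' (σ : ι → ℝ) (q : Option R → ℕ) (elig : R → Finset ι) :
    ∀ (os : List (Option R)) (I : Finset ι) (u : Option R), u ∉ os →
      seqAssign σ q elig os I u = ∅ := by
  intro os
  induction os with
  | nil => intro I u _; rfl
  | cons v rest ih =>
      intro I u hu
      simp only [List.mem_cons, not_or] at hu
      simp only [seqAssign]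
      rw [if_neg hu.1]
      exact ih _ _ hu.2

lemma biUnion_seqAssign_cons' (σ : ι → ℝ) (q : Option R → ℕ) (elig : R → Finset ι)
    (v : Option R) (rest : List (Option R)) (hv : v ∉ rest) (I : Finset ι) :
    Finset.univ.biUnion (seqAssign σ q elig (v :: rest) I) =
      topK σ (I ∩ eligOf elig v) (q v) ∪
        Finset.univ.biUnion (seqAssign σ q elig rest (I \ topK σ (I ∩ eligOf elig v) (q v))) := by
  ext i
  simp only [Finset.mem_biUnion, Finset.mem_univ, true_and, Finset.mem_union]
  constructor
  · rintro ⟨u, hu⟩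
    simp only [seqAssign] at hu
    by_cases h : u = v
    · rw [if_pos h] at hu; left; exact hu
    · rw [if_neg h] at hu; right; exact ⟨u, hu⟩
  · rintro (h | ⟨u, hu⟩)
    · exact ⟨v, by simp only [seqAssign, if_pos rfl]; exact h⟩
    · refine ⟨u, ?_⟩
      simp only [seqAssign]
      by_cases h : u = v
      · subst h
        rw [seqAssign_eq_empty' σ q elig rest _ _ hv] at hu
        exact absurd hu (Finset.notMem_empty i)
      · rw [if_neg h]; exact hu

lemma seq_castes' (σ : ι → ℝ) (q : Option R → ℕ) (elig : R → Finset ι)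
    (e : R) (B : Finset ι) (A : R → Finset ι) :
    ∀ (M : List R) (W : Finset ι), M.Nodup → e ∉ M →
      (∀ c ∈ M, W ∩ elig c = B ∩ elig c) →
      (∀ c ∈ M, topK σ (B ∩ elig c) (q (some c)) = A c) →
      (∀ c ∈ M, A c ⊆ elig c) →
      (∀ c ∈ M, ∀ c' ∈ M, c ≠ c' → Disjoint (elig c) (elig c')) →
      Finset.univ.biUnion (seqAssign σ q elig (M.map some ++ [some e]) W) =
        M.toFinset.biUnion A ∪
          topK σ ((W \ M.toFinset.biUnion A) ∩ elig e) (q (some e)) := by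
  intro M
  induction M with
  | nil =>
      intro W _ _ _ _ _ _
      rw [List.map_nil, List.nil_append]
      rw [biUnion_seqAssign_cons' σ q elig (some e) [] (by simp) W]
      have : ∀ (I' : Finset ι), Finset.univ.biUnion (seqAssign σ q elig [] I') = ∅ := by
        intro I'; ext i; simp [seqAssign]
      rw [this]
      simp [eligOf]
  | cons c M' ih =>
      intro W hnd he hinv hA hAsub hdisj
      have hce : c ≠ e := fun h => he (h ▸ (List.mem_cons_self : c ∈ c :: M'))
      have hcM' : c ∉ M' := (List.nodup_cons.mp hnd).1
      have hlist : ((c :: M').map some ++ [some e]) = some c :: (M'.map some ++ [some e]) := by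
        simp
      rw [hlist, biUnion_seqAssign_cons' σ q elig (some c) (M'.map some ++ [some e])
        (by simp [hcM', hce]) W]
      have heligc : eligOf elig (some c) = elig c := rfl
      have hWc : W ∩ eligOf elig (some c) = B ∩ elig c := by
        rw [heligc]; exact hinv c ((List.mem_cons_self : c ∈ c :: M'))
      have hheadpick : topK σ (W ∩ eligOf elig (some c)) (q (some c)) = A c := by
        rw [hWc]; exact hA c ((List.mem_cons_self : c ∈ c :: M'))
      rw [hheadpick]
      have hmemc : c ∈ c :: M' := (List.mem_cons_self : c ∈ c :: M')
      have hih := ih (W \ A c) (List.nodup_cons.mp hnd).2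
        (fun h => he (List.mem_cons_of_mem c h))
        (by
          intro c' hc'
          have hc'mem : c' ∈ c :: M' := List.mem_cons_of_mem c hc'
          have hcc' : c ≠ c' := fun h => hcM' (h ▸ hc')
          have hdis : Disjoint (elig c) (elig c') := hdisj c hmemc c' hc'mem hcc'
          have hAc : Disjoint (A c) (elig c') := Finset.disjoint_of_subset_left (hAsub c hmemc) hdis
          rw [← hinv c' hc'mem]
          ext i
          simp only [Finset.mem_inter, Finset.mem_sdiff]
          constructor
          · rintro ⟨⟨hiW, _⟩, hie⟩; exact ⟨hiW, hie⟩
          · rintro ⟨hiW, hie⟩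
            exact ⟨⟨hiW, fun hiA => (Finset.disjoint_left.mp hAc) hiA hie⟩, hie⟩)
        (fun c' hc' => hA c' (List.mem_cons_of_mem c hc'))
        (fun c' hc' => hAsub c' (List.mem_cons_of_mem c hc'))
        (fun c' hc' c'' hc'' h => hdisj c' (List.mem_cons_of_mem c hc') c''
          (List.mem_cons_of_mem c hc'') h)
      rw [hih]
      have htf : (c :: M').toFinset.biUnion A = A c ∪ M'.toFinset.biUnion A := by
        rw [List.toFinset_cons, Finset.biUnion_insert]
      rw [htf]
      have hsd : ((W \ A c) \ M'.toFinset.biUnion A) ∩ elig e = (W \ (A c ∪ M'.toFinset.biUnion A)) ∩ elig e := by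
        ext i; simp only [Finset.mem_inter, Finset.mem_sdiff, Finset.mem_union]; tauto
      rw [hsd, Finset.union_assoc]

lemma mem_aggOA' {σ : ι → ℝ} {q : Option R → ℕ} {ρ : ι → Finset R} {I : Finset ι} {i : ι} :
    i ∈ aggOA σ q ρ I ↔ i ∈ topK σ I (q none) ∨ ∃ c : R,
      i ∈ topK σ ((I \ topK σ I (q none)) ∩ eligρ ρ c) (q (some c)) := by
  simp only [aggOA, aggC, Finset.mem_biUnion, Finset.mem_univ, true_and]
  constructor
  · rintro ⟨v, hv⟩
    cases v with
    | none => left; exact hv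
    | some c => right; exact ⟨c, hv⟩
  · rintro (h | ⟨c, h⟩)
    · exact ⟨none, h⟩
    · exact ⟨some c, h⟩
/-- Corollary: the EWS-last sequential rule under `ρ*` and the Over-and-Above
rule under `ρ̊` choose the same individuals on `I` iff `I` is materially unaffected by the
violation of the Equality Code, i.e. no nonempty subset of `𝒥 ∩ I` suffers a violation. -/
theorem ewsLast_eq_OA_iff_unaffected (σ : ι → ℝ) (hσ : Function.Injective σ)
    (q : Option R → ℕ) (ρ : ι → Finset R) (hρ : ∀ i, (ρ i).card ≤ 1) (e : R)
    (JJ : Finset ι) (hJJ : ∀ j ∈ JJ, (ρ j).Nonempty ∧ e ∉ ρ j)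
    (L : List R) (hLnd : L.Nodup) (heL : e ∉ L) (hLall : ∀ c : R, c ≠ e → c ∈ L) :
    ∀ I : Finset ι,
      (aggSeq σ q (ρstar ρ e JJ) (ewsLastOrder e L) I = aggOA σ q ρ I) ↔
        ∀ J : Finset ι, J.Nonempty → J ⊆ JJ ∩ I → ¬ Suffers σ q ρ e JJ I J := by
  intro I
  classical
  set O := topK σ I (q none) with hO
  set A : R → Finset ι := fun c => topK σ ((I \ O) ∩ eligρ ρ c) (q (some c)) with hA
  set U := L.toFinset.biUnion A with hU
  set X := (I \ O) ∩ eligρ ρ e with hX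
  set Y := (JJ ∩ I) \ aggOA σ q ρ I with hY
  set k := q (some e) with hk
  -- basic facts
  have hAsubE : ∀ c, A c ⊆ eligρ ρ c := fun c =>
    subset_trans (topK_subset' _ _ _) Finset.inter_subset_right
  have hJJe : ∀ i ∈ JJ, i ∉ eligρ ρ e := fun i h hie => (hJJ i h).2 (mem_eligρ'.mp hie)
  have hXU : ∀ i ∈ X, i ∉ U := by
    intro i hiX hiU
    rw [hU, Finset.mem_biUnion] at hiU
    obtain ⟨c, hcL, hiAc⟩ := hiU
    rw [List.mem_toFinset] at hcL
    have hce : c ≠ e := fun h => heL (h ▸ hcL)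
    have hie : i ∈ eligρ ρ e := (Finset.mem_inter.mp hiX).2
    exact (Finset.disjoint_left.mp (eligρ_disjoint' hρ hce)) (hAsubE c hiAc) hie
  -- decomposition of aggOA
  have hoa : aggOA σ q ρ I = O ∪ (U ∪ A e) := by
    ext i
    rw [mem_aggOA', ← hO]
    simp only [Finset.mem_union]
    constructor
    · rintro (h | ⟨c, hc⟩)
      · exact Or.inl h
      · by_cases hce : c = e
        · subst hce; exact Or.inr (Or.inr hc)
        · refine Or.inr (Or.inl ?_)
          rw [hU, Finset.mem_biUnion]
          exact ⟨c, List.mem_toFinset.mpr (hLall c hce), hc⟩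
    · rintro (h | h | h)
      · exact Or.inl h
      · rw [hU, Finset.mem_biUnion] at h
        obtain ⟨c, _, hc⟩ := h
        exact Or.inr ⟨c, hc⟩
      · exact Or.inr ⟨e, h⟩
  have hOagg : O ⊆ aggOA σ q ρ I := by rw [hoa]; exact Finset.subset_union_left
  have hUagg : U ⊆ aggOA σ q ρ I := by
    rw [hoa]; exact subset_trans Finset.subset_union_left Finset.subset_union_right
  have hYfacts : ∀ i ∈ Y, i ∈ JJ ∧ i ∈ I ∧ i ∉ O ∧ i ∉ U ∧ i ∉ aggOA σ q ρ I := by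
    intro i hi
    rw [hY, Finset.mem_sdiff, Finset.mem_inter] at hi
    exact ⟨hi.1.1, hi.1.2, fun h => hi.2 (hOagg h), fun h => hi.2 (hUagg h), hi.2⟩
  have hXY : Disjoint X Y := by
    rw [Finset.disjoint_left]
    intro i hiX hiY
    exact hJJe i (hYfacts i hiY).1 (Finset.mem_inter.mp hiX).2
  -- decomposition of aggSeq
  have hseq : aggSeq σ q (ρstar ρ e JJ) (ewsLastOrder e L) I = O ∪ (U ∪ topK σ (X ∪ Y) k) := by
    rw [aggSeq, ewsLastOrder]
    rw [biUnion_seqAssign_cons' σ q (eligρ (ρstar ρ e JJ)) none (L.map some ++ [some e])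
      (by simp) I]
    have h1 : I ∩ eligOf (eligρ (ρstar ρ e JJ)) none = I := by
      show I ∩ Finset.univ = I
      exact Finset.inter_univ I
    rw [h1, ← hO]
    rw [seq_castes' σ q (eligρ (ρstar ρ e JJ)) e (I \ O) A L (I \ O) hLnd heL
      (fun c _ => rfl)
      (fun c hc => by rw [eligρ_ρstar_ne' (ne_of_mem_of_not_mem hc heL)])
      (fun c hc => by
        rw [eligρ_ρstar_ne' (ne_of_mem_of_not_mem hc heL)]
        exact hAsubE c)
      (fun c hc c' hc' hne => by
        rw [eligρ_ρstar_ne' (ne_of_mem_of_not_mem hc heL),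
          eligρ_ρstar_ne' (ne_of_mem_of_not_mem hc' heL)]
        exact eligρ_disjoint' hρ hne)]
    rw [← hU, ← hk]
    have hpool : ((I \ O) \ U) ∩ eligρ (ρstar ρ e JJ) e = X ∪ Y := by
      rw [eligρ_ρstar_e']
      ext i
      simp only [Finset.mem_inter, Finset.mem_sdiff, Finset.mem_union]
      constructor
      · rintro ⟨⟨⟨hiI, hiO⟩, hiU⟩, helig | hjj⟩
        · exact Or.inl (Finset.mem_inter.mpr ⟨Finset.mem_sdiff.mpr ⟨hiI, hiO⟩, helig⟩)
        · refine Or.inr ?_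
          rw [hY, Finset.mem_sdiff]
          refine ⟨Finset.mem_inter.mpr ⟨hjj, hiI⟩, ?_⟩
          rw [hoa]
          simp only [Finset.mem_union]
          rintro (h | h | h)
          · exact hiO h
          · exact hiU h
          · exact hJJe i hjj (hAsubE e h)
      · rintro (h | h)
        · have h' := Finset.mem_inter.mp h
          have h'' := Finset.mem_sdiff.mp h'.1
          exact ⟨⟨⟨h''.1, h''.2⟩, hXU i h⟩, Or.inl h'.2⟩
        · obtain ⟨hjj, hiI, hiO, hiU, _⟩ := hYfacts i h
          exact ⟨⟨⟨hiI, hiO⟩, hiU⟩, Or.inr hjj⟩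
    rw [hpool]
  -- the two aggregates agree iff the e-picks agree
  have hAeE : A e = topK σ X k := rfl
  have hAeX : A e ⊆ X := by rw [hAeE]; exact topK_subset' σ X k
  have hEsub : topK σ (X ∪ Y) k ⊆ X ∪ Y := topK_subset' _ _ _
  have hAeXY : A e ⊆ X ∪ Y := subset_trans hAeX Finset.subset_union_left
  have hcancel : ∀ T ⊆ X ∪ Y, (O ∪ (U ∪ T)) \ (O ∪ U) = T := by
    intro T hT
    ext i
    simp only [Finset.mem_sdiff, Finset.mem_union, not_or]
    constructor
    · rintro ⟨h | h | h, hO', hU'⟩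
      · exact absurd h hO'
      · exact absurd h hU'
      · exact h
    · intro hiT
      have hixy := hT hiT
      have hiO : i ∉ O := by
        rcases Finset.mem_union.mp hixy with h | h
        · exact (Finset.mem_sdiff.mp (Finset.mem_inter.mp h).1).2
        · exact (hYfacts i h).2.2.1
      have hiU : i ∉ U := by
        rcases Finset.mem_union.mp hixy with h | h
        · exact hXU i h
        · exact (hYfacts i h).2.2.2.1
      exact ⟨Or.inr (Or.inr hiT), hiO, hiU⟩
  have hiff1 : (O ∪ (U ∪ topK σ (X ∪ Y) k) = O ∪ (U ∪ A e)) ↔ topK σ (X ∪ Y) k = A e := by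
    constructor
    · intro h
      have := congrArg (fun s => s \ (O ∪ U)) h
      simpa only [hcancel _ hEsub, hcancel _ hAeXY] using this
    · intro h; rw [h]
  -- e-picks agree iff no top-k member comes from Y
  have hiff2 : topK σ (X ∪ Y) k = A e ↔ ∀ i ∈ topK σ (X ∪ Y) k, i ∉ Y := by
    constructor
    · intro h i hi hiY
      rw [h] at hi
      exact Finset.disjoint_left.mp hXY (hAeX hi) hiY
    · intro h
      have hsubX : topK σ (X ∪ Y) k ⊆ X := by
        intro i hi
        rcases Finset.mem_union.mp (hEsub hi) with h' | h'
        · exact h'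
        · exact absurd h' (h i hi)
      have hsub : topK σ (X ∪ Y) k ⊆ A e := by
        intro i hi
        exact topK_mono' Finset.subset_union_left hi (hsubX hi)
      refine (Finset.eq_of_subset_of_card_le hsub ?_)
      have h1 : (A e).card = min k X.card := by rw [hAeE]; exact card_topK' σ hσ X k
      have h2 : (topK σ (X ∪ Y) k).card = min k (X ∪ Y).card := card_topK' σ hσ _ _
      have h3 : X.card ≤ (X ∪ Y).card := Finset.card_le_card Finset.subset_union_left
      omega
  -- membership in aggOA under the updated profile
  have hupd : ∀ J : Finset ι, (∀ j ∈ J, j ∈ Y) → ∀ j ∈ J,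
      (j ∈ aggOA σ q (updProf ρ e J) I ↔ j ∈ topK σ (X ∪ J) k) := by
    intro J hJY j hj
    have hJIO : ∀ j' ∈ J, j' ∈ I \ O := by
      intro j' hj'
      obtain ⟨_, h1, h2, _, _⟩ := hYfacts j' (hJY j' hj')
      exact Finset.mem_sdiff.mpr ⟨h1, h2⟩
    have hXmem : ∀ i : ι, i ∈ X ↔ i ∈ I \ O ∧ i ∈ eligρ ρ e := fun i => Finset.mem_inter
    have hset : (I \ O) ∩ (eligρ ρ e ∪ J) = X ∪ J := by
      ext i
      simp only [Finset.mem_inter, Finset.mem_union, hXmem]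
      constructor
      · rintro ⟨hio, h | h⟩
        · exact Or.inl ⟨hio, h⟩
        · exact Or.inr h
      · rintro (⟨h1, h2⟩ | h)
        · exact ⟨h1, Or.inl h2⟩
        · exact ⟨hJIO i h, Or.inr h⟩
    rw [mem_aggOA', ← hO]
    have hjO : j ∉ O := (hYfacts j (hJY j hj)).2.2.1
    constructor
    · rintro (h | ⟨c, hc⟩)
      · exact absurd h hjO
      · by_cases hce : c = e
        · subst hce
          rw [eligρ_upd_e', hset] at hc
          exact hc
        · exfalso
          have := subset_trans (topK_subset' _ _ _) Finset.inter_subset_right hc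
          rw [eligρ_upd_ne' hce, Finset.mem_sdiff] at this
          exact this.2 hj
    · intro h
      refine Or.inr ⟨e, ?_⟩
      rw [eligρ_upd_e', hset]
      exact h
  -- characterization of Suffers
  have hchar : ∀ J : Finset ι, J ⊆ JJ ∩ I →
      (Suffers σ q ρ e JJ I J ↔ (∀ j ∈ J, j ∈ Y) ∧ ∀ j ∈ J, j ∈ topK σ (X ∪ J) k) := by
    intro J hJsub
    constructor
    · rintro ⟨_, h2⟩
      have hJY : ∀ j ∈ J, j ∈ Y := by
        intro j hj
        rw [hY, Finset.mem_sdiff]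
        exact ⟨hJsub hj, (h2 j hj).1⟩
      exact ⟨hJY, fun j hj => (hupd J hJY j hj).mp (h2 j hj).2⟩
    · rintro ⟨hJY, htop⟩
      refine ⟨hJsub, fun j hj => ?_⟩
      refine ⟨(Finset.mem_sdiff.mp (hY ▸ hJY j hj)).2, (hupd J hJY j hj).mpr (htop j hj)⟩
  -- final chain
  rw [hseq, hoa, hiff1, hiff2]
  constructor
  · intro hnoY J hJne hJsub hsuf
    obtain ⟨hJY, htop⟩ := (hchar J hJsub).mp hsuf
    obtain ⟨j, hj⟩ := hJne
    have hjY : j ∈ Y := hJY j hj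
    have hjXY : j ∈ X ∪ Y := Finset.mem_union_right X hjY
    have hjE : j ∉ topK σ (X ∪ Y) k := fun h => hnoY j h hjY
    have hjcount : ¬ ((X ∪ Y).filter fun l => σ j ≤ σ l).card ≤ k := by
      intro h; exact hjE (mem_topK'.mpr ⟨hjXY, h⟩)
    have hXYcard : k + 1 ≤ (X ∪ Y).card := by
      have := Finset.card_le_card (Finset.filter_subset (fun l => σ j ≤ σ l) (X ∪ Y))
      omega
    have hEcard : (topK σ (X ∪ Y) k).card = k := by
      rw [card_topK' σ hσ]; omega
    have hins : insert j (topK σ (X ∪ Y) k) ⊆ (X ∪ J).filter fun l => σ j ≤ σ l := by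
      intro i hi
      rcases Finset.mem_insert.mp hi with rfl | hi'
      · exact Finset.mem_filter.mpr ⟨Finset.mem_union_right X hj, le_refl _⟩
      · have hiX : i ∈ X := by
          rcases Finset.mem_union.mp (hEsub hi') with h | h
          · exact h
          · exact absurd h (hnoY i hi')
        exact Finset.mem_filter.mpr ⟨Finset.mem_union_left J hiX,
          (topK_lt_of_not_mem' hσ hi' hjXY hjE).le⟩
    have hcard2 : k + 1 ≤ ((X ∪ J).filter fun l => σ j ≤ σ l).card := by
      have h1 : (insert j (topK σ (X ∪ Y) k)).card = k + 1 := by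
        rw [Finset.card_insert_of_notMem hjE, hEcard]
      calc k + 1 = (insert j (topK σ (X ∪ Y) k)).card := h1.symm
        _ ≤ _ := Finset.card_le_card hins
    have := (mem_topK'.mp (htop j hj)).2
    omega
  · intro hno i hiE hiY
    set J := topK σ (X ∪ Y) k ∩ Y with hJ
    have hJY : ∀ j ∈ J, j ∈ Y := fun j hj => (Finset.mem_inter.mp hj).2
    have hJsub : J ⊆ JJ ∩ I := by
      intro j hj
      obtain ⟨h1, h2, _, _, _⟩ := hYfacts j (hJY j hj)
      exact Finset.mem_inter.mpr ⟨h1, h2⟩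
    refine hno J ⟨i, Finset.mem_inter.mpr ⟨hiE, hiY⟩⟩ hJsub ?_
    rw [hchar J hJsub]
    refine ⟨hJY, fun j hj => ?_⟩
    have hjE : j ∈ topK σ (X ∪ Y) k := (Finset.mem_inter.mp hj).1
    exact topK_mono' (Finset.union_subset_union_right (fun a ha => (Finset.mem_inter.mp ha).2))
      hjE (Finset.mem_union_right X hj)
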